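/- For any (possibly complex) antisymmetric rank-2 tensors L and N on Minkowski space, (*L)_{νμ}(*N)^{μρ} + (*N)_{νμ}(*L)^{μρ} = L_{νμ}N^{μρ} + N_{νμ}L^{μρ} + L_{μτ}N^{μτ} δ_ν^ρ, where δ is the identity tensor. -/
import Mathlib


noncomputable section
open Complex Finset

/-- The Minkowski metric `diag(+1,-1,-1,-1)` on `ℝ⁴`. -/
def gR (μ ν : Fin 4) : ℝ := if μ = ν then (if μ = (0 : Fin 4) then 1 else -1) else 0

/-- The value of an index as a real number. -/
def fv (a : Fin 4) : ℝ := (a : ℕ)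

/-- The totally antisymmetric symbol `ε` with `ε₀₁₂₃ = +1`. -/
def eps (a b c d : Fin 4) : ℝ :=
  ((fv b - fv a) * (fv c - fv a) * (fv d - fv a) *
    (fv c - fv b) * (fv d - fv b) * (fv d - fv c)) / 12

/-- The Hodge star of an antisymmetric rank-2 (lower-index) tensor:
`(*L)_{μν} = (1/2) L^{κλ} ε_{κλμν}`, indices raised with the Minkowski metric. -/
def hodge (L : Fin 4 → Fin 4 → ℂ) (μ ν : Fin 4) : ℂ :=
  (1/2) * ∑ κ : Fin 4, ∑ l : Fin 4, ((gR κ κ * gR l l * eps κ l μ ν : ℝ) : ℂ) * L κ l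

lemma hodge_00 (L : Fin 4 → Fin 4 → ℂ) : hodge L 0 0 = 0 := by
  simp [hodge, Fin.sum_univ_four, gR, eps, fv, show ((3:Fin 4):ℕ)=3 from rfl]
lemma hodge_01 (L : Fin 4 → Fin 4 → ℂ) : hodge L 0 1 = (L 2 3 - L 3 2)/2 := by
  simp [hodge, Fin.sum_univ_four, gR, eps, fv, show ((3:Fin 4):ℕ)=3 from rfl]
  norm_num
  ring
lemma hodge_02 (L : Fin 4 → Fin 4 → ℂ) : hodge L 0 2 = (L 3 1 - L 1 3)/2 := by
  simp [hodge, Fin.sum_univ_four, gR, eps, fv, show ((3:Fin 4):ℕ)=3 from rfl]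
  norm_num
  ring
lemma hodge_03 (L : Fin 4 → Fin 4 → ℂ) : hodge L 0 3 = (L 1 2 - L 2 1)/2 := by
  simp [hodge, Fin.sum_univ_four, gR, eps, fv, show ((3:Fin 4):ℕ)=3 from rfl]
  norm_num
  ring
lemma hodge_10 (L : Fin 4 → Fin 4 → ℂ) : hodge L 1 0 = -((L 2 3 - L 3 2)/2) := by
  simp [hodge, Fin.sum_univ_four, gR, eps, fv, show ((3:Fin 4):ℕ)=3 from rfl]
  norm_num
  ring
lemma hodge_11 (L : Fin 4 → Fin 4 → ℂ) : hodge L 1 1 = 0 := by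
  simp [hodge, Fin.sum_univ_four, gR, eps, fv, show ((3:Fin 4):ℕ)=3 from rfl]
lemma hodge_12 (L : Fin 4 → Fin 4 → ℂ) : hodge L 1 2 = (L 3 0 - L 0 3)/2 := by
  simp [hodge, Fin.sum_univ_four, gR, eps, fv, show ((3:Fin 4):ℕ)=3 from rfl]
  norm_num
  ring
lemma hodge_13 (L : Fin 4 → Fin 4 → ℂ) : hodge L 1 3 = (L 0 2 - L 2 0)/2 := by
  simp [hodge, Fin.sum_univ_four, gR, eps, fv, show ((3:Fin 4):ℕ)=3 from rfl]
  norm_num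
  ring
lemma hodge_20 (L : Fin 4 → Fin 4 → ℂ) : hodge L 2 0 = -((L 3 1 - L 1 3)/2) := by
  simp [hodge, Fin.sum_univ_four, gR, eps, fv, show ((3:Fin 4):ℕ)=3 from rfl]
  norm_num
  ring
lemma hodge_21 (L : Fin 4 → Fin 4 → ℂ) : hodge L 2 1 = -((L 3 0 - L 0 3)/2) := by
  simp [hodge, Fin.sum_univ_four, gR, eps, fv, show ((3:Fin 4):ℕ)=3 from rfl]
  norm_num
  ring
lemma hodge_22 (L : Fin 4 → Fin 4 → ℂ) : hodge L 2 2 = 0 := by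
  simp [hodge, Fin.sum_univ_four, gR, eps, fv, show ((3:Fin 4):ℕ)=3 from rfl]
lemma hodge_23 (L : Fin 4 → Fin 4 → ℂ) : hodge L 2 3 = (L 1 0 - L 0 1)/2 := by
  simp [hodge, Fin.sum_univ_four, gR, eps, fv, show ((3:Fin 4):ℕ)=3 from rfl]
  norm_num
  ring
lemma hodge_30 (L : Fin 4 → Fin 4 → ℂ) : hodge L 3 0 = -((L 1 2 - L 2 1)/2) := by
  simp [hodge, Fin.sum_univ_four, gR, eps, fv, show ((3:Fin 4):ℕ)=3 from rfl]
  norm_num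
  ring
lemma hodge_31 (L : Fin 4 → Fin 4 → ℂ) : hodge L 3 1 = -((L 0 2 - L 2 0)/2) := by
  simp [hodge, Fin.sum_univ_four, gR, eps, fv, show ((3:Fin 4):ℕ)=3 from rfl]
  norm_num
  ring
lemma hodge_32 (L : Fin 4 → Fin 4 → ℂ) : hodge L 3 2 = -((L 1 0 - L 0 1)/2) := by
  simp [hodge, Fin.sum_univ_four, gR, eps, fv, show ((3:Fin 4):ℕ)=3 from rfl]
  norm_num
  ring
lemma hodge_33 (L : Fin 4 → Fin 4 → ℂ) : hodge L 3 3 = 0 := by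
  simp [hodge, Fin.sum_univ_four, gR, eps, fv, show ((3:Fin 4):ℕ)=3 from rfl]

set_option maxHeartbeats 2000000 in
/-- for antisymmetric rank-2 tensors `L`, `N` on Minkowski space,
`(*L)_{νμ}(*N)^{μρ} + (*N)_{νμ}(*L)^{μρ} = L_{νμ}N^{μρ} + N_{νμ}L^{μρ} + L_{μτ}N^{μτ} δ_ν^ρ`. -/
theorem hodge_anticommutator_identity (L N : Fin 4 → Fin 4 → ℂ)
    (hL : ∀ μ ν, L μ ν = - L ν μ) (hN : ∀ μ ν, N μ ν = - N ν μ) (ν ρ : Fin 4) :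
    ∑ μ : Fin 4, ((gR μ μ * gR ρ ρ : ℝ) : ℂ) *
        (hodge L ν μ * hodge N μ ρ + hodge N ν μ * hodge L μ ρ)
      = (∑ μ : Fin 4, ((gR μ μ * gR ρ ρ : ℝ) : ℂ) * (L ν μ * N μ ρ + N ν μ * L μ ρ))
        + (∑ μ : Fin 4, ∑ τ : Fin 4, ((gR μ μ * gR τ τ : ℝ) : ℂ) * L μ τ * N μ τ)
          * (if ν = ρ then 1 else 0) := by
  have hL00 : L 0 0 = 0 := by linear_combination (hL 0 0)/2
  have hL11 : L 1 1 = 0 := by linear_combination (hL 1 1)/2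
  have hL22 : L 2 2 = 0 := by linear_combination (hL 2 2)/2
  have hL33 : L 3 3 = 0 := by linear_combination (hL 3 3)/2
  have hN00 : N 0 0 = 0 := by linear_combination (hN 0 0)/2
  have hN11 : N 1 1 = 0 := by linear_combination (hN 1 1)/2
  have hN22 : N 2 2 = 0 := by linear_combination (hN 2 2)/2
  have hN33 : N 3 3 = 0 := by linear_combination (hN 3 3)/2
  have hL10 := hL 1 0; have hL20 := hL 2 0; have hL30 := hL 3 0
  have hL21 := hL 2 1; have hL31 := hL 3 1; have hL32 := hL 3 2
  have hN10 := hN 1 0; have hN20 := hN 2 0; have hN30 := hN 3 0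
  have hN21 := hN 2 1; have hN31 := hN 3 1; have hN32 := hN 3 2
  fin_cases ν <;> fin_cases ρ <;>
    simp only [Fin.sum_univ_four, Fin.isValue, Fin.reduceFinMk, Fin.reduceEq, reduceIte, hodge_00, hodge_01, hodge_02, hodge_03,
      hodge_10, hodge_11, hodge_12, hodge_13, hodge_20, hodge_21, hodge_22, hodge_23,
      hodge_30, hodge_31, hodge_32, hodge_33] <;>
    rw [hL10, hL20, hL30, hL21, hL31, hL32, hN10, hN20, hN30, hN21, hN31, hN32,
      hL00, hL11, hL22, hL33, hN00, hN11, hN22, hN33] <;>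
    simp only [gR, Fin.reduceEq, reduceIte, Complex.ofReal_one, Complex.ofReal_neg] <;> push_cast <;> ring
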